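/- arXiv:math/0609507 — 3 statements merged into one kernel-verified Lean document; each statement's English description precedes it below -/
import Mathlib

section
/- (Cartan Lemma) Let T be an n-dimensional vector space with basis ω¹,…,ωⁿ of T*, and let η₁,…,ηₙ ∈ T* satisfy Σ_α η_α ∧ ω^α = 0 in Λ²T*. Then there exist scalars q_{αβ} with q_{αβ} = q_{βα} such that η_α = Σ_β q_{αβ} ω^β for all α. -/
open ExteriorAlgebra

/-- Auxiliary alternating bilinear map `v ↦ f(v 0) g(v 1) - g(v 0) f(v 1)`. -/
noncomputable def cartanAlt {K M : Type*} [Field K] [AddCommGroup M] [Module K M]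
    (f g : M →ₗ[K] K) : M [⋀^Fin 2]→ₗ[K] K where
  toFun v := f (v 0) * g (v 1) - g (v 0) * f (v 1)
  map_update_add' v a x y := by
    fin_cases a <;>
      simp [Function.update, Fin.ext_iff, map_add] <;> ring
  map_update_smul' v a c x := by
    fin_cases a <;>
      simp [Function.update, Fin.ext_iff, map_smul] <;> ring
  map_eq_zero_of_eq' v a b hab hne := by
    fin_cases a <;> fin_cases b <;> simp_all <;> ring

theorem cartanAlt_lift {K M : Type*} [Field K] [AddCommGroup M] [Module K M]
    (f g : M →ₗ[K] K) (x y : M) :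
    liftAlternating (R := K) (M := M) (N := K)
      (fun k => match k with | 2 => cartanAlt f g | _ => 0)
      (ExteriorAlgebra.ι K x * ExteriorAlgebra.ι K y) =
      f x * g y - g x * f y := by
  have hx : ExteriorAlgebra.ι K x * ExteriorAlgebra.ι K y = ιMulti K 2 ![x, y] := by
    simp [ιMulti_apply, List.ofFn_succ]
  rw [hx, liftAlternating_apply_ιMulti]
  simp [cartanAlt]

/-- Cartan Lemma: if `ω¹,…,ωⁿ` is a basis of `T*` and `η₁,…,ηₙ ∈ T*` satisfy
`Σ_α η_α ∧ ω^α = 0` in `Λ²T*`, then `η_α = Σ_β q_{αβ} ω^β` with `q_{αβ} = q_{βα}`. -/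
theorem cartan_lemma {K : Type*} [Field K] [CharZero K]
    {T : Type*} [AddCommGroup T] [Module K T] [FiniteDimensional K T]
    {n : ℕ} (ω : Module.Basis (Fin n) K (Module.Dual K T))
    (η : Fin n → Module.Dual K T)
    (h : ∑ α : Fin n,
        (ExteriorAlgebra.ι K (η α)) * (ExteriorAlgebra.ι K (ω α)) = 0) :
    ∃ q : Fin n → Fin n → K, (∀ α β, q α β = q β α) ∧
      ∀ α, η α = ∑ β : Fin n, q α β • ω β := by
  refine ⟨fun α β => ω.repr (η α) β, fun i j => ?_, fun α => (ω.sum_repr (η α)).symm⟩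
  have key := congrArg (liftAlternating (R := K) (M := Module.Dual K T) (N := K)
      (fun k => match k with | 2 => cartanAlt (ω.coord i) (ω.coord j) | _ => 0)) h
  rw [map_sum, map_zero] at key
  simp only [cartanAlt_lift] at key
  have : ∀ α : Fin n, (ω.coord i) (η α) * (ω.coord j) (ω α)
      - (ω.coord j) (η α) * (ω.coord i) (ω α)
      = (if α = j then (ω.repr (η α)) i else 0)
        - (if α = i then (ω.repr (η α)) j else 0) := by
    intro α
    simp [Module.Basis.coord_apply, Module.Basis.repr_self, Finsupp.single_apply]
  simp only [this, Finset.sum_sub_distrib, Finset.sum_ite_eq, Finset.sum_ite_eq', Finset.mem_univ, if_true,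
    sub_eq_zero] at key
  exact key.symm
end

section
/- Let A ⊂ S²T* be a linear subspace of quadratic forms on a finite-dimensional vector space T over ℂ, and let q ∈ A have maximal rank among elements of A. If u ∈ T satisfies q(u, w) = 0 for all w ∈ T (u is in the singular locus of q), then Q(u, u) = 0 for every Q ∈ A; i.e. u lies in the common zero locus of A. -/
open Polynomial Matrix

set_option maxRecDepth 8000 in
/-- Classical Bertini (linear algebra form): if `q` has maximal rank in a linear system
`A ⊂ S²T*` of symmetric bilinear forms and `u` is in the singular locus of `q`, then `u`
is in the common zero locus of `A`. -/
theorem bertini_linear_algebra {T : Type*} [AddCommGroup T] [Module ℂ T]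
    [FiniteDimensional ℂ T]
    (A : Submodule ℂ (LinearMap.BilinForm ℂ T))
    (hsym : ∀ Q ∈ A, ∀ x y : T, Q x y = Q y x)
    (q : LinearMap.BilinForm ℂ T) (hq : q ∈ A)
    (hmax : ∀ q' ∈ A, LinearMap.rank q' ≤ LinearMap.rank q)
    (u : T) (hu : ∀ w : T, q u w = 0) :
    ∀ Q ∈ A, Q u u = 0 := by
  classical
  intro Q hQ
  by_contra hd
  have hqs : ∀ x y : T, q x y = q y x := hsym q hq
  have hqu : ∀ x : T, q x u = 0 := fun x => (hqs x u).trans (hu x)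
  set K := LinearMap.ker q with hK
  obtain ⟨W, hW⟩ := Submodule.exists_isCompl K
  set m := Module.finrank ℂ W with hm
  let b : Module.Basis (Fin m) ℂ W := Module.finBasis ℂ W
  let w : Fin m → T := fun i => (b i : T)
  have hWspan : W = Submodule.span ℂ (Set.range w) := by
    have : Set.range w = W.subtype '' Set.range b := by
      rw [← Set.range_comp]; rfl
    rw [this, Submodule.span_image, b.span_eq, Submodule.map_top, Submodule.range_subtype]
  -- the Gram matrix of q on W is invertible
  let B : Matrix (Fin m) (Fin m) ℂ := Matrix.of fun i j => q (w i) (w j)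
  have hB : B.det ≠ 0 := by
    intro hdet
    obtain ⟨x, hx0, hxB⟩ := (Matrix.exists_mulVec_eq_zero_iff).2 hdet
    set vW : W := ∑ j, x j • b j with hvW
    set v : T := (vW : T) with hv
    have hvsum : v = ∑ j, x j • w j := by
      simp [hv, hvW, w]
    have hqi : ∀ i, q (w i) v = 0 := by
      intro i
      have := congrFun hxB i
      simp only [Matrix.mulVec, dotProduct, Pi.zero_apply] at this
      rw [hvsum, map_sum]
      simpa [Matrix.of_apply, mul_comm, B] using this
    have hvK : v ∈ K := by
      rw [hK, LinearMap.mem_ker]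
      apply LinearMap.ext
      intro y
      have hKle : K ≤ LinearMap.ker (q v) := by
        intro k hk
        rw [LinearMap.mem_ker]
        have : q k = 0 := hk
        rw [hqs v k, this]; rfl
      have hWle : W ≤ LinearMap.ker (q v) := by
        rw [hWspan]
        rw [Submodule.span_le]
        rintro _ ⟨i, rfl⟩
        rw [SetLike.mem_coe, LinearMap.mem_ker, hqs v (w i)]
        exact hqi i
      have htop : (⊤ : Submodule ℂ T) ≤ LinearMap.ker (q v) := by
        rw [← hW.sup_eq_top]
        exact sup_le hKle hWle
      exact htop (Submodule.mem_top)
    have hv0 : v = 0 := by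
      have : v ∈ K ⊓ W := ⟨hvK, vW.2⟩
      rw [hW.inf_eq_bot] at this
      simpa using this
    have hvW0 : vW = 0 := by
      rw [← ZeroMemClass.coe_eq_zero]
      exact hv0
    have := Fintype.linearIndependent_iff.mp b.linearIndependent x (by rw [← hvW]; exact hvW0)
    exact hx0 (funext this)
  -- the family u, w₁, ..., wₘ and the polynomial matrix
  let vf : Fin (m + 1) → T := Fin.cons u w
  let N : Matrix (Fin (m + 1)) (Fin (m + 1)) ℂ[X] :=
    Matrix.of (Fin.cons (Fin.cons (C (Q u u)) fun j => C (Q u (w j)))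
      fun i => Fin.cons (X * C (Q (w i) u))
        fun j => C (q (w i) (w j)) + X * C (Q (w i) (w j)))
  have hNdet0 : eval 0 N.det ≠ 0 := by
    have hmap : eval 0 N.det = ((N.map (evalRingHom 0)).det) := by
      rw [show (N.map (evalRingHom 0)) = (evalRingHom 0).mapMatrix N from rfl,
        ← RingHom.map_det]
      rfl
    rw [hmap, Matrix.det_succ_column_zero, Fin.sum_univ_succ]
    have h1 : ∀ i : Fin m, (N.map (evalRingHom 0)) i.succ 0 = 0 := by
      intro i
      simp [N, Matrix.map_apply]
    have h2 : (N.map (evalRingHom 0)).submatrix (Fin.succAbove 0) Fin.succ = B := by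
      funext i j
      simp [N, B, Matrix.submatrix_apply, Matrix.map_apply, Fin.succAbove_zero]
    rw [h2]
    simp only [h1, zero_mul, mul_zero, Finset.sum_const_zero, add_zero]
    have h3 : (N.map (evalRingHom 0)) 0 0 = Q u u := by simp [N, Matrix.map_apply]
    rw [h3]
    simp only [Fin.val_zero, pow_zero, one_mul]
    exact mul_ne_zero hd hB
  have hPne : N.det ≠ 0 := fun h => hNdet0 (by rw [h]; simp)
  -- choose a good parameter t
  have hfin : {x : ℂ | (N.det * X).IsRoot x}.Finite :=
    Polynomial.finite_setOf_isRoot (mul_ne_zero hPne X_ne_zero)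
  obtain ⟨t, ht⟩ := hfin.infinite_compl.nonempty
  have htroot : eval t N.det * t ≠ 0 := by
    have := ht
    simp only [Set.mem_compl_iff, Set.mem_setOf_eq, Polynomial.IsRoot, eval_mul, eval_X] at this
    exact this
  obtain ⟨htP, ht0⟩ := mul_ne_zero_iff.mp htroot
  -- the perturbed form
  set q' : LinearMap.BilinForm ℂ T := q + t • Q with hq'
  have hq'A : q' ∈ A := A.add_mem hq (A.smul_mem t hQ)
  let M : Matrix (Fin (m + 1)) (Fin (m + 1)) ℂ := Matrix.of fun i j => q' (vf i) (vf j)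
  have hN00 : N 0 0 = C (Q u u) := rfl
  have hN0s : ∀ j, N 0 j.succ = C (Q u (w j)) := fun j => rfl
  have hNs0 : ∀ i, N i.succ 0 = X * C (Q (w i) u) := fun i => rfl
  have hNss : ∀ i j, N i.succ j.succ = C (q (w i) (w j)) + X * C (Q (w i) (w j)) :=
    fun i j => rfl
  have hq'app : ∀ x y : T, q' x y = q x y + t * Q x y := by
    intro x y
    rw [hq']
    simp
  have hMeq : M = (N.map (evalRingHom t)).updateRow 0
      (t • ((N.map (evalRingHom t)) 0)) := by
    funext i j
    refine Fin.cases ?_ (fun i => ?_) i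
    · rw [Matrix.updateRow_self]
      refine Fin.cases ?_ (fun j => ?_) j
      · show q' u u = (t • ((N.map (evalRingHom t)) 0)) 0
        rw [Pi.smul_apply, Matrix.map_apply, hN00, hq'app, hu u]
        simp
      · show q' u (w j) = (t • ((N.map (evalRingHom t)) 0)) j.succ
        rw [Pi.smul_apply, Matrix.map_apply, hN0s, hq'app, hu (w j)]
        simp
    · rw [Matrix.updateRow_ne (Fin.succ_ne_zero i)]
      refine Fin.cases ?_ (fun j => ?_) j
      · show q' (w i) u = (N.map (evalRingHom t)) i.succ 0
        rw [Matrix.map_apply, hNs0, hq'app, hqu (w i)]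
        simp
        ring
      · show q' (w i) (w j) = (N.map (evalRingHom t)) i.succ j.succ
        rw [Matrix.map_apply, hNss, hq'app]
        simp
        ring
  have hMdet : M.det ≠ 0 := by
    rw [hMeq, Matrix.det_updateRow_smul, Matrix.updateRow_eq_self,
      show (N.map (evalRingHom t)) = (evalRingHom t).mapMatrix N from rfl, ← RingHom.map_det]
    exact mul_ne_zero ht0 htP
  -- q' has rank ≥ m + 1
  have hli : LinearIndependent ℂ fun i => q' (vf i) := by
    rw [Fintype.linearIndependent_iff]
    intro c hc
    by_contra hcne
    push_neg at hcne
    obtain ⟨i0, hi0⟩ := hcne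
    have hc0 : c ≠ 0 := fun h => hi0 (by rw [h]; rfl)
    have hmv : Mᵀ.mulVec c = 0 := by
      funext j
      have := congrArg (fun f : T →ₗ[ℂ] ℂ => f (vf j)) hc
      simp only [LinearMap.sum_apply, LinearMap.smul_apply, smul_eq_mul,
        LinearMap.zero_apply] at this
      simpa [Matrix.mulVec, dotProduct, Matrix.transpose_apply, M, mul_comm] using this
    have : Mᵀ.det = 0 := Matrix.exists_mulVec_eq_zero_iff.1 ⟨c, hc0, hmv⟩
    rw [Matrix.det_transpose] at this
    exact hMdet this
  have h1 : m + 1 ≤ Module.finrank ℂ (LinearMap.range q') := by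
    have hli2 : LinearIndependent ℂ fun i =>
        (⟨q' (vf i), LinearMap.mem_range_self q' (vf i)⟩ : LinearMap.range q') := by
      apply LinearIndependent.of_comp (LinearMap.range q').subtype
      exact hli
    simpa using hli2.fintype_card_le_finrank
  have h2 : Module.finrank ℂ (LinearMap.range q') ≤ Module.finrank ℂ (LinearMap.range q) := by
    have := hmax q' hq'A
    rw [LinearMap.rank, LinearMap.rank, ← Module.finrank_eq_rank, ← Module.finrank_eq_rank]
      at this
    exact_mod_cast this
  have h3 : Module.finrank ℂ (LinearMap.range q) + Module.finrank ℂ K = Module.finrank ℂ T :=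
    LinearMap.finrank_range_add_finrank_ker q
  have h4 : Module.finrank ℂ K + m = Module.finrank ℂ T :=
    Submodule.finrank_add_eq_of_isCompl hW
  omega
end

section
/- Let A ⊂ S²T* be a linear subspace of symmetric bilinear forms on an n-dimensional complex vector space T, and suppose every element of A has rank at most r. Then for any q ∈ A of rank exactly r, the kernel K = {v : q(v,·)=0} (of dimension n - r) satisfies: for all Q ∈ A and all u, v ∈ K, Q(u, v) = 0. -/
open Polynomial Matrix Module

/-- If the Gram matrix of a bilinear form on a finite family of vectors is nonsingular,
the rank of the form is at least the cardinality of the family. -/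
theorem gram_det_ne_zero_rank_le {T : Type*} [AddCommGroup T] [Module ℂ T]
    [FiniteDimensional ℂ T] {ι : Type} [Fintype ι] [DecidableEq ι]
    (B : LinearMap.BilinForm ℂ T) (w : ι → T)
    (hG : (Matrix.of fun i j => B (w i) (w j)).det ≠ 0) :
    (Fintype.card ι : Cardinal) ≤ LinearMap.rank B := by
  classical
  set G : Matrix ι ι ℂ := Matrix.of fun i j => B (w i) (w j) with hGdef
  have hInd : LinearIndependent ℂ (fun i => B (w i)) := by
    rw [Fintype.linearIndependent_iff]
    intro c hc i
    have h2 : Matrix.vecMul c G = 0 := by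
      funext j
      have h1 := congrArg (fun φ : T →ₗ[ℂ] ℂ => φ (w j)) hc
      simpa [Matrix.vecMul, dotProduct, G] using h1
    have hGu : IsUnit G.det := hG.isUnit
    have h3 := congrArg (fun v => Matrix.vecMul v G⁻¹) h2
    simpa [Matrix.vecMul_vecMul, Matrix.mul_nonsing_inv G hGu] using congrFun h3 i
  have hspan : Submodule.span ℂ (Set.range fun i => B (w i)) ≤ LinearMap.range B := by
    rw [Submodule.span_le]
    rintro _ ⟨i, rfl⟩
    exact ⟨w i, rfl⟩
  have hfin : Fintype.card ι ≤ Module.finrank ℂ (LinearMap.range B) := by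
    calc Fintype.card ι
        = Module.finrank ℂ (Submodule.span ℂ (Set.range fun i => B (w i))) :=
          (finrank_span_eq_card hInd).symm
      _ ≤ Module.finrank ℂ (LinearMap.range B) := Submodule.finrank_mono hspan
  have := Module.finrank_eq_rank ℂ (LinearMap.range B)
  calc (Fintype.card ι : Cardinal) ≤ (Module.finrank ℂ (LinearMap.range B) : Cardinal) := by
        exact_mod_cast hfin
    _ = LinearMap.rank B := Module.finrank_eq_rank ℂ _

/-- Key polynomial argument: a pencil of matrices with a corner perturbation has a
nonsingular member. -/
theorem exists_pencil_det_ne_zero {r : ℕ}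
    (G0 G1 : Matrix (Fin r ⊕ Unit) (Fin r ⊕ Unit) ℂ)
    (h0row : ∀ j, G0 (Sum.inr ()) j = 0)
    (h0col : ∀ i, G0 i (Sum.inr ()) = 0)
    (hblock : (Matrix.of fun i j : Fin r => G0 (Sum.inl i) (Sum.inl j)).det ≠ 0)
    (hc : G1 (Sum.inr ()) (Sum.inr ()) ≠ 0) :
    ∃ t : ℂ, (G0 + t • G1).det ≠ 0 := by
  classical
  set MX : Matrix (Fin r ⊕ Unit) (Fin r ⊕ Unit) ℂ[X] :=
    Matrix.of fun i j => C (G0 i j) + X * C (G1 i j) with hMX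
  set p : ℂ[X] := MX.det with hp
  have heval : ∀ t : ℂ, p.eval t = (G0 + t • G1).det := by
    intro t
    have hmap : MX.map (evalRingHom t) = G0 + t • G1 := by
      ext i j
      simp [MX, Matrix.map_apply, Matrix.add_apply, Matrix.smul_apply, smul_eq_mul]
      ring
    calc p.eval t = evalRingHom t MX.det := rfl
      _ = (MX.map (evalRingHom t)).det := RingHom.map_det _ _
      _ = (G0 + t • G1).det := by rw [hmap]
  set N : Matrix (Fin r ⊕ Unit) (Fin r ⊕ Unit) ℂ[X] :=
    Matrix.updateRow MX (Sum.inr ()) (fun j => C (G1 (Sum.inr ()) j)) with hN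
  have hrow : MX = Matrix.updateRow MX (Sum.inr ())
      ((X : ℂ[X]) • fun j => C (G1 (Sum.inr ()) j)) := by
    ext i j
    rcases eq_or_ne i (Sum.inr ()) with rfl | h
    · simp [MX, h0row]
    · simp [Matrix.updateRow_ne h]
  have hpXN : p = X * N.det := by
    rw [hp]
    conv_lhs => rw [hrow]
    rw [Matrix.det_updateRow_smul]
  have hN0 : N.map (evalRingHom 0) =
      Matrix.updateRow G0 (Sum.inr ()) (fun j => G1 (Sum.inr ()) j) := by
    ext i j
    rcases eq_or_ne i (Sum.inr ()) with rfl | h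
    · simp [N]
    · simp [N, Matrix.updateRow_ne h, MX]
  have hblockdet :
      (Matrix.updateRow G0 (Sum.inr ()) (fun j => G1 (Sum.inr ()) j)).det =
        (Matrix.of fun i j : Fin r => G0 (Sum.inl i) (Sum.inl j)).det *
          G1 (Sum.inr ()) (Sum.inr ()) := by
    have hfb : Matrix.updateRow G0 (Sum.inr ()) (fun j => G1 (Sum.inr ()) j) =
        Matrix.fromBlocks (Matrix.of fun i j : Fin r => G0 (Sum.inl i) (Sum.inl j)) 0
          (Matrix.of fun (_ : Unit) (j : Fin r) => G1 (Sum.inr ()) (Sum.inl j))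
          (Matrix.of fun (_ : Unit) (_ : Unit) => G1 (Sum.inr ()) (Sum.inr ())) := by
      ext i j
      rcases i with i | i <;> rcases j with j | j
      · simp [Matrix.updateRow_ne (show (Sum.inl i : Fin r ⊕ Unit) ≠ Sum.inr () by simp)]
      · simp [Matrix.updateRow_ne (show (Sum.inl i : Fin r ⊕ Unit) ≠ Sum.inr () by simp),
          h0col]
      · simp
      · simp
    rw [hfb, Matrix.det_fromBlocks_zero₁₂]
    congr 1
    rw [Matrix.det_unique]
    rfl
  have hcoeff : p.coeff 1 =
      (Matrix.of fun i j : Fin r => G0 (Sum.inl i) (Sum.inl j)).det *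
        G1 (Sum.inr ()) (Sum.inr ()) := by
    rw [hpXN, Polynomial.coeff_X_mul, Polynomial.coeff_zero_eq_eval_zero]
    calc N.det.eval 0 = evalRingHom 0 N.det := rfl
      _ = (N.map (evalRingHom 0)).det := RingHom.map_det _ _
      _ = _ := by rw [hN0, hblockdet]
  have hpne : p ≠ 0 := by
    intro h0
    rw [h0, Polynomial.coeff_zero] at hcoeff
    exact (mul_ne_zero hblock hc) hcoeff.symm
  by_contra hall
  push_neg at hall
  apply hpne
  apply Polynomial.zero_of_eval_zero
  intro t
  rw [heval t]
  exact hall t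

/-- Mobile Bertini, key linear-algebra step: in a linear system `A ⊂ S²T*` of symmetric
bilinear forms on an `n`-dimensional space, all of rank `≤ r`, the kernel `K` of an
element `q` of rank exactly `r` (of dimension `n - r`) is isotropic for every `Q ∈ A`. -/
theorem mobile_bertini_isotropic {T : Type*} [AddCommGroup T] [Module ℂ T]
    [FiniteDimensional ℂ T] {n r : ℕ} (hn : Module.finrank ℂ T = n)
    (A : Submodule ℂ (LinearMap.BilinForm ℂ T))
    (hsym : ∀ Q ∈ A, ∀ x y : T, Q x y = Q y x)
    (hrank : ∀ Q ∈ A, LinearMap.rank Q ≤ (r : Cardinal))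
    (q : LinearMap.BilinForm ℂ T) (hq : q ∈ A)
    (hqr : LinearMap.rank q = (r : Cardinal)) :
    Module.finrank ℂ (LinearMap.ker q) = n - r ∧
    ∀ Q ∈ A, ∀ u ∈ LinearMap.ker q, ∀ v ∈ LinearMap.ker q, Q u v = 0 := by
  classical
  have hrn : r ≤ n := by
    have h1 : LinearMap.rank q ≤ Module.rank ℂ T := LinearMap.rank_le_domain q
    rw [hqr, ← Module.finrank_eq_rank ℂ T, hn] at h1
    exact_mod_cast h1
  have hrange : Module.finrank ℂ (LinearMap.range q) = r := by
    have h1 : (Module.finrank ℂ (LinearMap.range q) : Cardinal) = (r : Cardinal) := by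
      rw [Module.finrank_eq_rank]; exact hqr
    exact_mod_cast h1
  have hker : Module.finrank ℂ (LinearMap.ker q) = n - r := by
    have h2 := LinearMap.finrank_range_add_finrank_ker q
    rw [hrange, hn] at h2
    omega
  refine ⟨hker, ?_⟩
  have key : ∀ Q ∈ A, ∀ u ∈ LinearMap.ker q, Q u u = 0 := by
    intro Q hQ u hu
    by_contra hc
    obtain ⟨W, hWc⟩ := Submodule.exists_isCompl (LinearMap.ker q)
    have hWr : Module.finrank ℂ W = r := by
      have h3 := Submodule.finrank_add_eq_of_isCompl hWc
      rw [hker, hn] at h3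
      omega
    let bW : Basis (Fin r) ℂ W := (Module.finBasis ℂ W).reindex (finCongr hWr)
    set qW : LinearMap.BilinForm ℂ W := q.restrict W with hqW
    have hqWnd : qW.Nondegenerate := by
      refine LinearMap.BilinForm.Nondegenerate.ofSeparatingLeft ?_
      intro w hw
      have hwker : (w : T) ∈ LinearMap.ker q := by
        rw [LinearMap.mem_ker]
        apply LinearMap.ext
        intro x
        have hx : x ∈ (LinearMap.ker q) ⊔ W := by
          rw [hWc.sup_eq_top]; trivial
        obtain ⟨k, hk, w', hw', rfl⟩ := Submodule.mem_sup.mp hx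
        have e1 : q (w : T) k = 0 := by
          rw [hsym q hq (w : T) k, LinearMap.mem_ker.mp hk]
          rfl
        have e2 : q (w : T) w' = 0 := hw ⟨w', hw'⟩
        simp [e1, e2]
      have hmem : (w : T) ∈ (LinearMap.ker q) ⊓ W := ⟨hwker, w.2⟩
      rw [hWc.inf_eq_bot] at hmem
      exact Subtype.ext (by simpa using hmem)
    have hdetW : (LinearMap.BilinForm.toMatrix bW qW).det ≠ 0 :=
      (LinearMap.BilinForm.nondegenerate_iff_det_ne_zero bW).mp hqWnd
    set wv : Fin r ⊕ Unit → T := Sum.elim (fun i => (bW i : T)) (fun _ => u) with hwv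
    set G0 : Matrix (Fin r ⊕ Unit) (Fin r ⊕ Unit) ℂ :=
      Matrix.of fun i j => q (wv i) (wv j) with hG0
    set G1 : Matrix (Fin r ⊕ Unit) (Fin r ⊕ Unit) ℂ :=
      Matrix.of fun i j => Q (wv i) (wv j) with hG1
    have hqu : q u = 0 := LinearMap.mem_ker.mp hu
    have h0row : ∀ j, G0 (Sum.inr ()) j = 0 := by
      intro j; simp [G0, wv, hqu]
    have h0col : ∀ i, G0 i (Sum.inr ()) = 0 := by
      intro i
      have := hsym q hq (wv i) u
      simp only [G0, Matrix.of_apply, hwv, Sum.elim_inr]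
      rw [this, hqu]
      rfl
    have hblock : (Matrix.of fun i j : Fin r => G0 (Sum.inl i) (Sum.inl j)).det ≠ 0 := by
      have : (Matrix.of fun i j : Fin r => G0 (Sum.inl i) (Sum.inl j)) =
          LinearMap.BilinForm.toMatrix bW qW := by
        ext i j
        simp [G0, wv, qW, LinearMap.BilinForm.toMatrix_apply]
      rw [this]
      exact hdetW
    have hcor : G1 (Sum.inr ()) (Sum.inr ()) ≠ 0 := by
      simpa [G1, wv] using hc
    obtain ⟨t, hdt⟩ := exists_pencil_det_ne_zero G0 G1 h0row h0col hblock hcor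
    set Bt : LinearMap.BilinForm ℂ T := q + t • Q with hBt
    have hBtA : Bt ∈ A := A.add_mem hq (A.smul_mem t hQ)
    have hGram : (Matrix.of fun i j => Bt (wv i) (wv j)) = G0 + t • G1 := by
      ext i j
      simp [Bt, G0, G1]
    have hrk := gram_det_ne_zero_rank_le Bt wv (by rw [hGram]; exact hdt)
    have hle := hrank Bt hBtA
    have hcard : (Fintype.card (Fin r ⊕ Unit) : Cardinal) = ((r + 1 : ℕ) : Cardinal) := by
      simp
    rw [hcard] at hrk
    have : ((r + 1 : ℕ) : Cardinal) ≤ (r : Cardinal) := le_trans hrk hle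
    have : r + 1 ≤ r := by exact_mod_cast this
    omega
  intro Q hQ u hu v hv
  have h3 := key Q hQ (u + v) (add_mem hu hv)
  have h1 := key Q hQ u hu
  have h2 := key Q hQ v hv
  have hsymuv := hsym Q hQ v u
  rw [map_add] at h3
  simp only [LinearMap.add_apply, map_add] at h3
  rw [h1, h2, hsymuv] at h3
  have h4 : Q u v + Q u v = 0 := by linear_combination h3
  exact add_self_eq_zero.mp h4
end
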